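/- For all real v, u > 0 and α a positive real number that is not a nonnegative integer, the series ∑_{l=0}^∞ (Γ(l-α)/Γ(l+1)) · (Γ(u+l+1)/Γ(v+u+l+1)) converges and equals Γ(u+1)Γ(v+α)Γ(-α) / (Γ(v)Γ(u+α+v+1)). -/

import Mathlib

open Finset Set MeasureTheory Real Filter
open scoped ENNReal NNReal

noncomputable def binCoef (α : ℝ) (l : ℕ) : ℝ := (∏ j ∈ Finset.range l, (α - j)) / l.factorial

lemma binCoef_zero (α : ℝ) : binCoef α 0 = 1 := by simp [binCoef]

lemma binCoef_succ (α : ℝ) (l : ℕ) :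
    binCoef α (l + 1) * ((l : ℝ) + 1) = binCoef α l * (α - l) := by
  have h : ((l : ℝ) + 1) ≠ 0 := by positivity
  have h2 : (l.factorial : ℝ) ≠ 0 := by positivity
  simp only [binCoef, Nat.factorial_succ, Finset.prod_range_succ]
  push_cast
  field_simp

set_option maxHeartbeats 1000000 in
lemma hasSum_binomial (α : ℝ) (hα : 0 ≤ α) {x : ℝ} (hx : |x| < 1) :
    HasSum (fun l : ℕ => binCoef α l * x ^ l) ((1 + x) ^ α) := by
  set r : ℝ := (|x| + 1) / 2 with hr
  have hr0 : 0 < r := by positivity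
  have hxr : |x| < r := by rw [hr]; linarith
  have hr1 : r < 1 := by rw [hr]; linarith
  set u : ℕ → ℝ := fun l => |binCoef α l| * (l * r ^ (l - 1)) with hu_def
  have hu : Summable u := by
    apply summable_of_ratio_norm_eventually_le hr1
    filter_upwards [eventually_ge_atTop (⌈α⌉₊ + 1)] with l hl
    have hl1 : 1 ≤ l := le_trans (Nat.le_add_left 1 _) hl
    have hαl : α ≤ l := le_trans (Nat.le_ceil α) (by exact_mod_cast Nat.le_of_succ_le hl)
    have h1 : |binCoef α (l+1)| * ((l:ℝ) + 1) = |binCoef α l| * |α - l| := by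
      have h := congrArg abs (binCoef_succ α l)
      rwa [abs_mul, abs_mul, abs_of_pos (by positivity : (0:ℝ) < (l:ℝ) + 1)] at h
    have habs : |α - (l:ℝ)| ≤ l := by
      rw [abs_sub_comm, abs_of_nonneg (by linarith)]; linarith
    have hpow : r ^ (l + 1 - 1) = r * r ^ (l - 1) := by
      rcases Nat.exists_eq_add_of_le hl1 with ⟨k, hk⟩
      subst hk
      simp [pow_succ]
      ring
    have hul : u (l+1) = (|binCoef α (l+1)| * ((l:ℝ)+1)) * r ^ (l + 1 - 1) := by
      rw [hu_def]; push_cast; ring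
    rw [Real.norm_eq_abs, Real.norm_eq_abs, abs_of_nonneg (by positivity),
      abs_of_nonneg (by positivity), hul, h1, hpow]
    have : |binCoef α l| * |α - l| ≤ |binCoef α l| * l :=
      mul_le_mul_of_nonneg_left habs (abs_nonneg _)
    calc |binCoef α l| * |α - ↑l| * (r * r ^ (l - 1))
        ≤ |binCoef α l| * ↑l * (r * r ^ (l - 1)) := by
          apply mul_le_mul_of_nonneg_right this (by positivity)
      _ = r * u l := by rw [hu_def]; ring
  have hg : ∀ (l : ℕ) (y : ℝ), y ∈ Ioo (-r) r →
      HasDerivAt (fun z : ℝ => binCoef α l * z ^ l) (binCoef α l * ((l:ℝ) * y ^ (l - 1))) y :=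
    fun l y _ => (hasDerivAt_pow l y).const_mul _
  have hg' : ∀ (l : ℕ) (y : ℝ), y ∈ Ioo (-r) r →
      ‖binCoef α l * ((l:ℝ) * y ^ (l - 1))‖ ≤ u l := by
    intro l y hy
    have hyr : |y| ≤ r := le_of_lt (abs_lt.2 hy)
    rw [Real.norm_eq_abs, abs_mul, abs_mul, abs_pow, Nat.abs_cast]
    exact mul_le_mul_of_nonneg_left
      (mul_le_mul_of_nonneg_left (pow_le_pow_left₀ (abs_nonneg _) hyr _) (Nat.cast_nonneg l))
      (abs_nonneg _)
  have h0mem : (0:ℝ) ∈ Ioo (-r) r := Set.mem_Ioo.2 ⟨by linarith, hr0⟩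
  have hg0 : Summable (fun l : ℕ => binCoef α l * (0:ℝ) ^ l) := by
    apply summable_of_ne_finset_zero (s := {0})
    intro l hl
    simp only [Finset.mem_singleton] at hl
    simp [zero_pow hl]
  set g : ℝ → ℝ := fun z => ∑' l : ℕ, binCoef α l * z ^ l with hg_def
  set D : ℝ → ℝ := fun y => ∑' l : ℕ, binCoef α l * ((l:ℝ) * y ^ (l - 1)) with hD_def
  have hderiv : ∀ y ∈ Ioo (-r) r, HasDerivAt g (D y) y := fun y hy =>
    hasDerivAt_tsum_of_isPreconnected hu isOpen_Ioo (convex_Ioo _ _).isPreconnected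
      hg hg' h0mem hg0 hy
  have hsummable : ∀ y ∈ Ioo (-r) r, Summable (fun l : ℕ => binCoef α l * y ^ l) := fun y hy =>
    summable_of_summable_hasDerivAt_of_isPreconnected hu isOpen_Ioo
      (convex_Ioo _ _).isPreconnected hg hg' h0mem hg0 hy
  have hkey : ∀ y ∈ Ioo (-r) r, (1 + y) * D y = α * g y := by
    intro y hy
    have hS : Summable (fun l : ℕ => binCoef α l * ((l:ℝ) * y ^ (l - 1))) :=
      Summable.of_norm_bounded hu (fun l => hg' l y hy)
    have hD : HasSum (fun l : ℕ => binCoef α l * ((l:ℝ) * y ^ (l - 1))) (D y) := hS.hasSum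
    have h2 : HasSum (fun l : ℕ => binCoef α l * ((l:ℝ) * y ^ l)) (D y * y) := by
      have := hD.mul_right y
      refine this.congr_fun fun l => ?_
      rcases Nat.eq_zero_or_pos l with h0 | hpos
      · simp [h0]
      · rcases Nat.exists_eq_add_of_le hpos with ⟨k, hk⟩
        subst hk
        simp [pow_succ]
        ring
    have h3 : HasSum (fun l : ℕ => binCoef α (l+1) * (((l+1:ℕ):ℝ) * y ^ (l + 1 - 1))) (D y) := by
      refine (hasSum_nat_add_iff (f := fun l : ℕ => binCoef α l * ((l:ℝ) * y ^ (l - 1))) 1).2 ?_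
      simpa using hD
    have h3' : HasSum (fun l : ℕ => binCoef α l * (α - (l:ℝ)) * y ^ l) (D y) := by
      refine h3.congr_fun fun l => ?_
      simp only [Nat.add_sub_cancel]
      push_cast
      rw [← binCoef_succ α l]
      ring
    have h2' : HasSum (fun l : ℕ => binCoef α l * (l:ℝ) * y ^ l) (D y * y) := by
      refine h2.congr_fun fun l => by ring
    have h4 := h3'.add h2'
    have h5 : HasSum (fun l : ℕ => α * (binCoef α l * y ^ l)) (D y + D y * y) := by
      refine h4.congr_fun fun l => by ring
    have h6 : HasSum (fun l : ℕ => α * (binCoef α l * y ^ l)) (α * g y) :=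
      (hsummable y hy).hasSum.mul_left α
    have := h5.unique h6
    linarith [this]
  set φ : ℝ → ℝ := fun z => g z * (1 + z) ^ (-α) with hφ_def
  have hφ' : ∀ y ∈ Ioo (-r) r, HasDerivAt φ 0 y := by
    intro y hy
    have h1y : 0 < 1 + y := by have h := (Set.mem_Ioo.1 hy).1; linarith
    have hrp : HasDerivAt (fun z : ℝ => (1+z) ^ (-α)) (-α * (1+y) ^ (-α - 1)) y := by
      have h := (Real.hasDerivAt_rpow_const (x := 1+y) (p := -α) (Or.inl h1y.ne')).comp y
        ((hasDerivAt_id y).const_add 1)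
      simpa [Function.comp_def] using h
    have hmul := (hderiv y hy).mul hrp
    have hval : D y * (1 + y) ^ (-α) + g y * (-α * (1+y) ^ (-α - 1)) = 0 := by
      have e : (1+y) ^ (-α) = (1+y) ^ (-α - 1) * (1+y) := by
        rw [← Real.rpow_add_one h1y.ne' (-α - 1)]
        ring_nf
      rw [e]
      have : D y * ((1+y) ^ (-α-1) * (1+y)) + g y * (-α * (1+y)^(-α-1))
          = (1+y)^(-α-1) * ((1 + y) * D y - α * g y) := by ring
      rw [this, hkey y hy, sub_self, mul_zero]
    rw [← hval]
    exact hmul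
  have hconst : ∀ y ∈ Ioo (-r) r, φ y = φ 0 := by
    intro y hy
    have hsub : Icc (min y 0) (max y 0) ⊆ Ioo (-r) r := by
      intro z hz
      simp only [Set.mem_Ioo] at hy ⊢
      constructor
      · calc -r < min y 0 := lt_min hy.1 (by linarith) 
          _ ≤ z := hz.1
      · calc z ≤ max y 0 := hz.2
          _ < r := max_lt hy.2 hr0
    have hc : ContinuousOn φ (Icc (min y 0) (max y 0)) :=
      fun z hz => ((hφ' z (hsub hz)).continuousAt).continuousWithinAt
    have hd : ∀ z ∈ Ico (min y 0) (max y 0), HasDerivWithinAt φ 0 (Ici z) z :=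
      fun z hz => (hφ' z (hsub (Ico_subset_Icc_self hz))).hasDerivWithinAt
    have h1 := constant_of_has_deriv_right_zero hc hd
    have hy1 : y ∈ Icc (min y 0) (max y 0) := ⟨min_le_left _ _, le_max_left _ _⟩
    have hy0 : (0:ℝ) ∈ Icc (min y 0) (max y 0) := ⟨min_le_right _ _, le_max_right _ _⟩
    rw [h1 y hy1, h1 0 hy0]
  have hxmem : x ∈ Ioo (-r) r := abs_lt.1 hxr
  have hφ0 : φ 0 = 1 := by
    have hg0v : g 0 = 1 := by
      have he : g 0 = ∑' l : ℕ, binCoef α l * (0:ℝ) ^ l := rfl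
      rw [he, tsum_eq_single 0 (fun l hl => by simp [zero_pow hl])]
      simp [binCoef_zero]
    simp [hφ_def, hg0v]
  have hgx : g x = (1 + x) ^ α := by
    have h1x : 0 < 1 + x := by have := abs_lt.1 hx; linarith [this.1]
    have hc := hconst x hxmem
    rw [hφ0] at hc
    have h2 : g x * (1 + x) ^ (-α) = 1 := hc
    have hαpos : (0:ℝ) < (1+x) ^ α := Real.rpow_pos_of_pos h1x α
    have hinv : (1+x) ^ (-α) = ((1+x) ^ α)⁻¹ := Real.rpow_neg h1x.le α
    rw [hinv] at h2
    field_simp at h2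
    linarith
  have hfin : HasSum (fun l : ℕ => binCoef α l * x ^ l) (g x) := (hsummable x hxmem).hasSum
  rwa [hgx] at hfin

lemma Gamma_nat_sub (α : ℝ) (hαn : ∀ n : ℕ, α ≠ n) (l : ℕ) :
    Real.Gamma ((l : ℝ) - α) = (∏ j ∈ Finset.range l, ((j : ℝ) - α)) * Real.Gamma (-α) := by
  induction l with
  | zero => simp
  | succ l ih =>
    have hne : (l : ℝ) - α ≠ 0 := sub_ne_zero_of_ne fun h => hαn l h.symm
    have harg : ((l + 1 : ℕ) : ℝ) - α = ((l : ℝ) - α) + 1 := by push_cast; ring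
    rw [harg, Real.Gamma_add_one hne, ih, Finset.prod_range_succ]
    ring

/-- the specialized binomial series with Gamma coefficients -/
lemma hasSum_gamma_binomial (α : ℝ) (hα : 0 < α) (hαn : ∀ n : ℕ, α ≠ n) {x : ℝ}
    (hx0 : 0 < x) (hx1 : x < 1) :
    HasSum (fun l : ℕ => Real.Gamma ((l : ℝ) - α) / Real.Gamma ((l : ℝ) + 1) * x ^ l)
      (Real.Gamma (-α) * (1 - x) ^ α) := by
  have hb := (hasSum_binomial α hα.le (x := -x) (by rw [abs_neg, abs_of_pos hx0]; exact hx1)).mul_left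
    (Real.Gamma (-α))
  have h1 : (1 : ℝ) + -x = 1 - x := by ring
  rw [h1] at hb
  refine hb.congr_fun fun l => ?_
  rw [Gamma_nat_sub α hαn l, Real.Gamma_nat_eq_factorial l]
  have hprod : (∏ j ∈ Finset.range l, ((j : ℝ) - α)) = (-1 : ℝ) ^ l * ∏ j ∈ Finset.range l, (α - (j : ℝ)) := by
    calc (∏ j ∈ Finset.range l, ((j:ℝ) - α))
        = ∏ j ∈ Finset.range l, (-1 : ℝ) * (α - (j:ℝ)) :=
          Finset.prod_congr rfl fun j _ => by ring
      _ = (-1 : ℝ) ^ l * ∏ j ∈ Finset.range l, (α - (j:ℝ)) := by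
          rw [Finset.prod_mul_distrib, Finset.prod_const, Finset.card_range]
  rw [hprod, binCoef]
  have hfact : (l.factorial : ℝ) ≠ 0 := by positivity
  field_simp
  ring

/-- Real Beta integral. -/
lemma betaIntegral_real {s t : ℝ} (hs : 0 < s) (ht : 0 < t) :
    ∫ x in Set.Ioo (0:ℝ) 1, x ^ (s - 1) * (1 - x) ^ (t - 1)
      = Real.Gamma s * Real.Gamma t / Real.Gamma (s + t) := by
  have h := Complex.Gamma_mul_Gamma_eq_betaIntegral (s := (s:ℂ)) (t := (t:ℂ))
    (by simpa using hs) (by simpa using ht)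
  have hβ : Complex.betaIntegral (s:ℂ) (t:ℂ)
      = ((∫ x in Set.Ioo (0:ℝ) 1, x ^ (s - 1) * (1 - x) ^ (t - 1) : ℝ) : ℂ) := by
    rw [Complex.betaIntegral]
    have hEq : Set.EqOn (fun x : ℝ => (x:ℂ) ^ ((s:ℂ) - 1) * ((1:ℂ) - x) ^ ((t:ℂ) - 1))
        (fun x : ℝ => ((x ^ (s - 1) * (1 - x) ^ (t - 1) : ℝ) : ℂ)) (Set.uIcc (0:ℝ) 1) := by
      intro x hx
      rw [Set.uIcc_of_le (by norm_num : (0:ℝ) ≤ 1)] at hx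
      have hx0 : 0 ≤ x := hx.1
      have hx1 : 0 ≤ 1 - x := by linarith [hx.2]
      simp only
      rw [show ((s:ℂ) - 1) = ((s - 1 : ℝ) : ℂ) by push_cast; ring,
        show ((t:ℂ) - 1) = ((t - 1 : ℝ) : ℂ) by push_cast; ring,
        show ((1:ℂ) - (x:ℝ)) = (((1 - x : ℝ)) : ℂ) by push_cast; ring,
        ← Complex.ofReal_cpow hx0, ← Complex.ofReal_cpow hx1]
      push_cast
      ring
    rw [intervalIntegral.integral_congr hEq, intervalIntegral.integral_ofReal]
    congr 1
    rw [intervalIntegral.integral_of_le (by norm_num : (0:ℝ) ≤ 1),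
      MeasureTheory.integral_Ioc_eq_integral_Ioo]
  rw [hβ, ← Complex.ofReal_add, Complex.Gamma_ofReal, Complex.Gamma_ofReal,
    Complex.Gamma_ofReal, ← Complex.ofReal_mul, ← Complex.ofReal_mul] at h
  have h' := Complex.ofReal_injective h
  have hne : Real.Gamma (s + t) ≠ 0 := (Real.Gamma_pos_of_pos (by linarith)).ne'
  field_simp
  linarith [h']

/-- integrability of the Beta integrand -/
lemma betaIntegrand_integrable {s t : ℝ} (hs : 0 < s) (ht : 0 < t) :
    IntegrableOn (fun x : ℝ => x ^ (s - 1) * (1 - x) ^ (t - 1)) (Set.Ioo (0:ℝ) 1) := by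
  have hc := Complex.betaIntegral_convergent (u := (s:ℂ)) (v := (t:ℂ))
    (by simpa using hs) (by simpa using ht)
  rw [intervalIntegrable_iff_integrableOn_Ioc_of_le (by norm_num : (0:ℝ) ≤ 1)] at hc
  have hc' : IntegrableOn (fun x : ℝ => (x:ℂ) ^ ((s:ℂ) - 1) * ((1:ℂ) - x) ^ ((t:ℂ) - 1))
      (Set.Ioo (0:ℝ) 1) := hc.mono_set Set.Ioo_subset_Ioc_self
  have hre := hc'.re
  refine hre.congr ?_
  refine (MeasureTheory.ae_restrict_mem measurableSet_Ioo).mono fun x hx => ?_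
  have hx0 : (0:ℝ) ≤ x := hx.1.le
  have hx1 : (0:ℝ) ≤ 1 - x := by linarith [hx.2.le]
  simp only
  rw [show ((s:ℂ) - 1) = ((s - 1 : ℝ) : ℂ) by push_cast; ring,
    show ((t:ℂ) - 1) = ((t - 1 : ℝ) : ℂ) by push_cast; ring,
    show ((1:ℂ) - (x:ℝ)) = (((1 - x : ℝ)) : ℂ) by push_cast; ring,
    ← Complex.ofReal_cpow hx0, ← Complex.ofReal_cpow hx1, ← Complex.ofReal_mul]
  simp

set_option maxHeartbeats 2000000 in
theorem stmt0 (v u α : ℝ) (hv : 0 < v) (hu : 0 < u) (hα : 0 < α)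
    (hαn : ∀ n : ℕ, α ≠ n) :
    HasSum (fun l : ℕ =>
      Real.Gamma (l - α) / Real.Gamma (l + 1) *
        (Real.Gamma (u + l + 1) / Real.Gamma (v + u + l + 1)))
      (Real.Gamma (u + 1) * Real.Gamma (v + α) * Real.Gamma (-α) /
        (Real.Gamma v * Real.Gamma (u + α + v + 1))) := by
  set c : ℕ → ℝ := fun l => Real.Gamma ((l:ℝ) - α) / Real.Gamma ((l:ℝ) + 1) with hc_def
  set f : ℕ → ℝ → ℝ := fun l x => c l * (x ^ (u + (l:ℝ)) * (1 - x) ^ (v - 1)) with hf_def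
  set G : ℝ → ℝ := fun x => Real.Gamma (-α) * (x ^ u * (1 - x) ^ (v + α - 1)) with hG_def
  have hHasSum : ∀ x ∈ Set.Ioo (0:ℝ) 1, HasSum (fun l => f l x) (G x) := by
    intro x hx
    have hx0 := hx.1
    have hx1 := hx.2
    have h1x : (0:ℝ) < 1 - x := by linarith
    have hb := (hasSum_gamma_binomial α hα hαn hx0 hx1).mul_right (x ^ u * (1-x) ^ (v-1))
    have hval : Real.Gamma (-α) * (1-x) ^ α * (x ^ u * (1-x) ^ (v-1)) = G x := by
      rw [hG_def]
      simp only
      rw [show v + α - 1 = α + (v-1) by ring, Real.rpow_add h1x]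
      ring
    rw [hval] at hb
    refine hb.congr_fun fun l => ?_
    rw [hf_def]
    simp only
    rw [Real.rpow_add hx0, Real.rpow_natCast]
    ring
  have hcont : ∀ l : ℕ, ContinuousOn (f l) (Set.Ioo (0:ℝ) 1) := by
    intro l
    apply ContinuousOn.mul continuousOn_const
    apply ContinuousOn.mul
    · exact continuousOn_id.rpow_const fun x hx => Or.inl hx.1.ne'
    · exact (continuousOn_const.sub continuousOn_id).rpow_const
        fun x hx => Or.inl (by intro h; simp only [Pi.sub_apply, id] at h; nlinarith [hx.2, sub_eq_zero.1 h])
  have hGcont : ContinuousOn G (Set.Ioo (0:ℝ) 1) := by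
    apply ContinuousOn.mul continuousOn_const
    apply ContinuousOn.mul
    · exact continuousOn_id.rpow_const fun x hx => Or.inl hx.1.ne'
    · exact (continuousOn_const.sub continuousOn_id).rpow_const
        fun x hx => Or.inl (by intro h; simp only [Pi.sub_apply, id] at h; nlinarith [hx.2, sub_eq_zero.1 h])
  have hmeas : ∀ l : ℕ, AEStronglyMeasurable (f l) (volume.restrict (Set.Ioo (0:ℝ) 1)) :=
    fun l => (hcont l).aestronglyMeasurable measurableSet_Ioo
  have hGmeas : AEStronglyMeasurable G (volume.restrict (Set.Ioo (0:ℝ) 1)) :=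
    hGcont.aestronglyMeasurable measurableSet_Ioo
  have hInt : ∀ l : ℕ, IntegrableOn (f l) (Set.Ioo (0:ℝ) 1) := by
    intro l
    have h := (betaIntegrand_integrable (s := u + (l:ℝ) + 1) (t := v) (by positivity) hv).const_mul (c l)
    have he : (fun x : ℝ => c l * (x ^ (u + (l:ℝ) + 1 - 1) * (1-x) ^ (v-1))) = f l := by
      funext x
      rw [hf_def]
      simp only
      rw [show u + (l:ℝ) + 1 - 1 = u + (l:ℝ) by ring]
    rwa [show (fun x : ℝ => c l * (x ^ (u + (l:ℝ) + 1 - 1) * (1-x) ^ (v-1))) = f l from he] at h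
  have hIntG : IntegrableOn G (Set.Ioo (0:ℝ) 1) := by
    have h := (betaIntegrand_integrable (s := u + 1) (t := v + α) (by positivity) (by positivity)).const_mul (Real.Gamma (-α))
    have he : (fun x : ℝ => Real.Gamma (-α) * (x ^ (u + 1 - 1) * (1-x) ^ (v + α - 1))) = G := by
      funext x
      rw [hG_def]
      simp only
      rw [show u + 1 - 1 = u by ring]
    rwa [he] at h
  set N : ℕ := ⌈α⌉₊ with hN_def
  have hαN : α < N := lt_of_le_of_ne (Nat.le_ceil α) (hαn N)
  have hcpos : ∀ l : ℕ, N ≤ l → 0 < c l := by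
    intro l hl
    have h1 : (0:ℝ) < (l:ℝ) - α := by
      have : (N:ℝ) ≤ l := by exact_mod_cast hl
      linarith
    have h2 : (0:ℝ) < (l:ℝ) + 1 := by positivity
    exact div_pos (Real.Gamma_pos_of_pos h1) (Real.Gamma_pos_of_pos h2)
  have hfnonneg : ∀ (i : ℕ) (x : ℝ), x ∈ Set.Ioo (0:ℝ) 1 → 0 ≤ f (i + N) x := by
    intro i x hx
    have h1x : (0:ℝ) ≤ 1 - x := by linarith [hx.2]
    exact mul_nonneg (hcpos (i+N) (Nat.le_add_left N i)).le
      (mul_nonneg (Real.rpow_nonneg hx.1.le _) (Real.rpow_nonneg h1x _))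
  set J : ℕ → ℝ≥0∞ := fun l => ∫⁻ x in Set.Ioo (0:ℝ) 1, ‖f l x‖₊ with hJ_def
  have hJfin : ∀ l, J l < ⊤ := fun l => (hInt l).2
  have hT : ∑' l, J l ≠ ⊤ := by
    have hsplit : ∑ i ∈ Finset.range N, J i + ∑' i, J (i + N) = ∑' l, J l :=
      Summable.sum_add_tsum_nat_add' (k := N) ENNReal.summable
    have htail : ∑' i, J (i + N) ≠ ⊤ := by
      have hfm : ∀ i : ℕ, AEMeasurable (fun x => ENNReal.ofReal (f (i + N) x))
          (volume.restrict (Set.Ioo (0:ℝ) 1)) :=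
        fun i => ((hmeas (i+N)).aemeasurable).ennreal_ofReal
      have hJof : ∀ i : ℕ, J (i + N) = ∫⁻ x in Set.Ioo (0:ℝ) 1, ENNReal.ofReal (f (i+N) x) := by
        intro i
        apply lintegral_congr_ae
        refine (ae_restrict_mem measurableSet_Ioo).mono fun x hx => ?_
        show (↑‖f (i+N) x‖₊ : ℝ≥0∞) = ENNReal.ofReal (f (i+N) x)
        rw [← enorm_eq_nnnorm, ← ofReal_norm, Real.norm_eq_abs, abs_of_nonneg (hfnonneg i x hx)]
      set B : ℝ → ℝ≥0∞ := fun x =>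
        ENNReal.ofReal (G x) + ∑ i ∈ Finset.range N, (‖f i x‖₊ : ℝ≥0∞) with hB_def
      have hBbound : ∀ᵐ x ∂(volume.restrict (Set.Ioo (0:ℝ) 1)),
          (∑' i, ENNReal.ofReal (f (i+N) x)) ≤ B x := by
        refine (ae_restrict_mem measurableSet_Ioo).mono fun x hx => ?_
        have hs := hHasSum x hx
        have htailsum : HasSum (fun i => f (i+N) x)
            (G x - ∑ i ∈ Finset.range N, f i x) := by
          refine (hasSum_nat_add_iff (f := fun l => f l x) N).2 ?_
          simpa using hs
        have h1 : (∑' i, ENNReal.ofReal (f (i+N) x))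
            = ENNReal.ofReal (G x - ∑ i ∈ Finset.range N, f i x) := by
          rw [← ENNReal.ofReal_tsum_of_nonneg (fun i => hfnonneg i x hx) htailsum.summable,
            htailsum.tsum_eq]
        rw [h1]
        have h2 : G x - ∑ i ∈ Finset.range N, f i x
            ≤ G x + ∑ i ∈ Finset.range N, |f i x| := by
          have := Finset.abs_sum_le_sum_abs (fun i => f i x) (Finset.range N)
          have h3 := neg_abs_le (∑ i ∈ Finset.range N, f i x)
          linarith
        calc ENNReal.ofReal (G x - ∑ i ∈ Finset.range N, f i x)
            ≤ ENNReal.ofReal (G x + ∑ i ∈ Finset.range N, |f i x|) :=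
              ENNReal.ofReal_le_ofReal h2
          _ ≤ ENNReal.ofReal (G x) + ENNReal.ofReal (∑ i ∈ Finset.range N, |f i x|) :=
              ENNReal.ofReal_add_le
          _ = B x := by
              rw [hB_def]
              simp only
              congr 1
              rw [ENNReal.ofReal_sum_of_nonneg (fun i _ => abs_nonneg _)]
              exact Finset.sum_congr rfl fun i _ => by
                exact (Real.enorm_eq_ofReal_abs _).symm
      have hBfin : ∫⁻ x in Set.Ioo (0:ℝ) 1, B x < ⊤ := by
        rw [hB_def]
        simp only
        rw [lintegral_add_left' (hGmeas.aemeasurable.ennreal_ofReal)]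
        simp_rw [← enorm_eq_nnnorm]
        rw [lintegral_finset_sum' _ (fun i _ => (hmeas i).enorm)]
        apply ENNReal.add_lt_top.2
        constructor
        · refine lt_of_le_of_lt (lintegral_mono fun x => ?_) hIntG.2
          rw [Real.enorm_eq_ofReal_abs]
          exact ENNReal.ofReal_le_ofReal (le_abs_self _)
        · exact ENNReal.sum_lt_top.2 fun i _ => hJfin i
      have hlt : ∑' i, J (i + N) < ⊤ :=
        calc ∑' i, J (i + N) = ∑' i, ∫⁻ x in Set.Ioo (0:ℝ) 1, ENNReal.ofReal (f (i+N) x) :=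
              tsum_congr hJof
          _ = ∫⁻ x in Set.Ioo (0:ℝ) 1, ∑' i, ENNReal.ofReal (f (i+N) x) :=
              (lintegral_tsum hfm).symm
          _ ≤ ∫⁻ x in Set.Ioo (0:ℝ) 1, B x := lintegral_mono_ae hBbound
          _ < ⊤ := hBfin
      exact hlt.ne
    rw [← hsplit]
    exact ENNReal.add_ne_top.2 ⟨(ENNReal.sum_lt_top.2 fun i _ => hJfin i).ne, htail⟩
  have hT' : ∑' l, ∫⁻ x in Set.Ioo (0:ℝ) 1, (‖f l x‖₊ : ℝ≥0∞) ≠ ⊤ := by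
    simpa only [hJ_def] using hT
  have hEq : ∫ x in Set.Ioo (0:ℝ) 1, (∑' l, f l x) = ∑' l, ∫ x in Set.Ioo (0:ℝ) 1, f l x :=
    integral_tsum hmeas hT'
  have hsumInt : Summable (fun l => ∫ x in Set.Ioo (0:ℝ) 1, f l x) := by
    have hsumJ : Summable (fun l => (J l).toReal) := ENNReal.summable_toReal hT
    refine Summable.of_norm_bounded hsumJ fun l => ?_
    have h1 := MeasureTheory.norm_integral_le_lintegral_norm
      (μ := volume.restrict (Set.Ioo (0:ℝ) 1)) (f l)
    simp_rw [ofReal_norm] at h1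
    exact h1
  have hG_eq : ∫ x in Set.Ioo (0:ℝ) 1, (∑' l, f l x) = ∫ x in Set.Ioo (0:ℝ) 1, G x :=
    setIntegral_congr_fun measurableSet_Ioo (fun x hx => (hHasSum x hx).tsum_eq)
  have hGval : ∫ x in Set.Ioo (0:ℝ) 1, G x
      = Real.Gamma (-α) * (Real.Gamma (u+1) * Real.Gamma (v+α) / Real.Gamma ((u+1) + (v+α))) := by
    have hb := betaIntegral_real (show (0:ℝ) < u+1 by positivity) (show (0:ℝ) < v+α by positivity)
    rw [show u+1-1 = u from by ring] at hb
    rw [hG_def]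
    simp only
    rw [MeasureTheory.integral_const_mul, hb]
  have hfval : ∀ l : ℕ, ∫ x in Set.Ioo (0:ℝ) 1, f l x
      = c l * (Real.Gamma (u+(l:ℝ)+1) * Real.Gamma v / Real.Gamma (u+(l:ℝ)+1+v)) := by
    intro l
    have hb := betaIntegral_real (show (0:ℝ) < u+(l:ℝ)+1 by positivity) hv
    rw [show u+(l:ℝ)+1-1 = u+(l:ℝ) from by ring] at hb
    rw [hf_def]
    simp only
    rw [MeasureTheory.integral_const_mul, hb]
  have hfinal : HasSum (fun l => ∫ x in Set.Ioo (0:ℝ) 1, f l x)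
      (Real.Gamma (-α) * (Real.Gamma (u+1) * Real.Gamma (v+α) / Real.Gamma ((u+1)+(v+α)))) := by
    have h := hsumInt.hasSum
    rwa [← hEq, hG_eq, hGval] at h
  have h2 := hfinal.mul_left (Real.Gamma v)⁻¹
  have hΓv : Real.Gamma v ≠ 0 := (Real.Gamma_pos_of_pos hv).ne'
  have hval2 : (Real.Gamma v)⁻¹ * (Real.Gamma (-α) * (Real.Gamma (u+1) * Real.Gamma (v+α) / Real.Gamma ((u+1)+(v+α))))
      = Real.Gamma (u + 1) * Real.Gamma (v + α) * Real.Gamma (-α) / (Real.Gamma v * Real.Gamma (u + α + v + 1)) := by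
    rw [show (u+1)+(v+α) = u + α + v + 1 by ring]
    have hΓ3 : Real.Gamma (u + α + v + 1) ≠ 0 := (Real.Gamma_pos_of_pos (by positivity)).ne'
    field_simp
  rw [hval2] at h2
  refine h2.congr_fun fun l => ?_
  rw [hfval l, hc_def]
  simp only
  rw [show v + u + (l:ℝ) + 1 = u + (l:ℝ) + 1 + v by ring]
  have hΓ2 : Real.Gamma (u+(l:ℝ)+1+v) ≠ 0 := (Real.Gamma_pos_of_pos (by positivity)).ne'
  have hΓ1 : Real.Gamma ((l:ℝ)+1) ≠ 0 := (Real.Gamma_pos_of_pos (by positivity)).ne'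
  field_simp
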